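/- (Lemma 9, 'child exists'.) In the canonical model M(T₀,F₀), for any world w ∈ W, any datasets U, T, X ⊆ V, and any formula φ ∈ Φ such that [U]B^T_X φ ∉ F(w), there exists a world w' ∈ W such that w ∼_{U∪X} w', T ⊆ 𝒯_{w'}, and [U]φ ∉ F(w'). -/
import Mathlib


/-- Formulas of the Dynamic Logic of Trust-Based Beliefs over data variables `V`
and atomic propositions `A`:  p | ¬φ | φ→φ | B^T_X φ | [X]φ. -/
inductive Formula (V A : Type) : Type
  | atom : A → Formula V A
  | neg  : Formula V A → Formula V A
  | imp  : Formula V A → Formula V A → Formula V A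
  | bel  : Set V → Set V → Formula V A → Formula V A   -- `bel T X φ` is B^T_X φ
  | ann  : Set V → Formula V A → Formula V A           -- `ann X φ` is [X]φ

/-- A trustworthiness model `(W, {∼ₓ}, {𝒯_w}, π)`. -/
structure TModel (V A : Type) where
  W : Type
  sim : V → W → W → Prop
  sim_equiv : ∀ x : V, Equivalence (sim x)
  trust : W → Set V
  pi : A → Set (W × Set V)

namespace TModel

variable {V A : Type} (M : TModel V A)

/-- `w ∼_X u` iff `w ∼ₓ u` for each `x ∈ X`. -/
def simSet (X : Set V) (w u : M.W) : Prop := ∀ x ∈ X, M.sim x w u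

/-- The satisfaction relation `w,U ⊩ φ`. -/
def Sat : Formula V A → M.W → Set V → Prop
  | .atom p, w, U => (w, U) ∈ M.pi p
  | .neg φ, w, U => ¬ Sat φ w U
  | .imp φ ψ, w, U => Sat φ w U → Sat ψ w U
  | .bel T X φ, w, U => ∀ w' : M.W, M.simSet (X ∪ U) w w' → T ⊆ M.trust w' → Sat φ w' U
  | .ann X φ, w, U => Sat φ w (U ∪ X)

end TModel
/-- `φ ∧ ψ`, defined through `¬` and `→` in the usual way. -/
def Formula.conj {V A : Type} (φ ψ : Formula V A) : Formula V A :=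
  .neg (.imp φ (.neg ψ))

/-- `φ ↔ ψ`, defined through `¬` and `→` in the usual way. -/
def Formula.iff {V A : Type} (φ ψ : Formula V A) : Formula V A :=
  Formula.conj (.imp φ ψ) (.imp ψ φ)

/-- Propositional tautologies in the language `Φ`: formulas true under every
assignment of truth values to formulas respecting `¬` and `→`. -/
def Tautology {V A : Type} (φ : Formula V A) : Prop :=
  ∀ v : Formula V A → Prop,
    (∀ ψ, v (.neg ψ) ↔ ¬ v ψ) →
    (∀ ψ χ, v (.imp ψ χ) ↔ (v ψ → v χ)) →
    v φ

/-- Theorems of the Dynamic Logic of Trust-Based Beliefs: `⊢ φ`. -/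
inductive Prv {V A : Type} : Formula V A → Prop
  | taut {φ : Formula V A} : Tautology φ → Prv φ
  | truth (X : Set V) (φ : Formula V A) : Prv (.imp (.bel ∅ X φ) φ)
  | distB (T X : Set V) (φ ψ : Formula V A) :
      Prv (.imp (.bel T X (.imp φ ψ)) (.imp (.bel T X φ) (.bel T X ψ)))
  | distA (X : Set V) (φ ψ : Formula V A) :
      Prv (.imp (.ann X (.imp φ ψ)) (.imp (.ann X φ) (.ann X ψ)))
  | negIntro (T X : Set V) (φ : Formula V A) :
      Prv (.imp (.neg (.bel T X φ)) (.bel ∅ X (.neg (.bel T X φ))))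
  | mono {T T' X X' : Set V} (φ : Formula V A) :
      T ⊆ T' → X ⊆ X' → Prv (.imp (.bel T X φ) (.bel T' X' φ))
  | trust (T X Y : Set V) (φ : Formula V A) : Prv (.bel T X (.imp (.bel T Y φ) φ))
  | comb (X Y : Set V) (φ : Formula V A) :
      Prv (Formula.iff (.ann X (.ann Y φ)) (.ann (X ∪ Y) φ))
  | comm (T X Y : Set V) (φ : Formula V A) :
      Prv (Formula.iff (.ann Y (.bel T X φ)) (.bel T (Y ∪ X) (.ann Y φ)))
  | dual (X : Set V) (φ : Formula V A) :
      Prv (Formula.iff (.neg (.ann X φ)) (.ann X (.neg φ)))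
  | empty (φ : Formula V A) : Prv (Formula.iff (.ann ∅ φ) φ)
  | mp {φ ψ : Formula V A} : Prv (.imp φ ψ) → Prv φ → Prv ψ
  | necB (T X : Set V) {φ : Formula V A} : Prv φ → Prv (.bel T X φ)
  | necA (X : Set V) {φ : Formula V A} : Prv φ → Prv (.ann X φ)

/-- `F ⊢ φ`: φ is derivable from theorems of the system and the set of
additional assumptions `F` using the Modus Ponens inference rule only. -/
inductive Deriv {V A : Type} (F : Set (Formula V A)) : Formula V A → Prop
  | thm {φ : Formula V A} : Prv φ → Deriv F φ
  | hyp {φ : Formula V A} : φ ∈ F → Deriv F φ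
  | mp {φ ψ : Formula V A} : Deriv F (.imp φ ψ) → Deriv F φ → Deriv F ψ

/-- A set of formulas is consistent if no formula and its negation are both derivable. -/
def Consistent {V A : Type} (F : Set (Formula V A)) : Prop :=
  ¬ ∃ φ : Formula V A, Deriv F φ ∧ Deriv F (.neg φ)

/-- A maximal consistent set: a consistent set not properly contained in any consistent set. -/
def MaxConsistent {V A : Type} (F : Set (Formula V A)) : Prop :=
  Consistent F ∧ ∀ G : Set (Formula V A), F ⊆ G → Consistent G → G = F
/-- A triple `(Xᵢ, Tᵢ, Fᵢ)` labelling one step of a canonical-model world. -/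
abbrev Triple (V A : Type) := Set V × Set V × Set (Formula V A)

/-- Condition on a node labelled `T, F` of the canonical tree: `F` is a maximal
consistent set and `B^T_Y φ → φ ∈ F` for every dataset `Y` and formula `φ`. -/
def NodeOk {V A : Type} (T : Set V) (F : Set (Formula V A)) : Prop :=
  MaxConsistent F ∧ ∀ (Y : Set V) (φ : Formula V A), Formula.imp (.bel T Y φ) φ ∈ F

/-- `T(w)`: the last dataset `Tₙ` of the world `w` (worlds are written as lists of
triples with the most recent triple first; the empty list is the root `T₀, F₀`). -/
def worldT {V A : Type} (T₀ : Set V) : List (Triple V A) → Set V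
  | [] => T₀
  | (_, T, _) :: _ => T

/-- `F(w)`: the last set of formulas `Fₙ` of the world `w`. -/
def worldF {V A : Type} (F₀ : Set (Formula V A)) : List (Triple V A) → Set (Formula V A)
  | [] => F₀
  | (_, _, F) :: _ => F

/-- Worlds of the canonical model `M(T₀,F₀)`: sequences
`T₀,F₀,X₁,T₁,F₁,…,Xₙ,Tₙ,Fₙ` such that each `Fᵢ` is a maximal consistent set with
(a) `ψ ∈ Fᵢ` whenever `B^∅_{Xᵢ} ψ ∈ F_{i-1}` (for `i > 0`), and
(b) `B^{Tᵢ}_Y φ → φ ∈ Fᵢ` for every dataset `Y` and formula `φ`. -/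
def IsWorld {V A : Type} (T₀ : Set V) (F₀ : Set (Formula V A)) :
    List (Triple V A) → Prop
  | [] => NodeOk T₀ F₀
  | (X, T, F) :: rest =>
      IsWorld T₀ F₀ rest ∧ NodeOk T F ∧
        ∀ ψ : Formula V A, Formula.bel ∅ X ψ ∈ worldF F₀ rest → ψ ∈ F

/-- `u ∼ₓ v` in the canonical model: every edge along the unique simple path in the
tree between `u` and `v` is labelled with the variable `x`; equivalently, `u` and `v`
have a common ancestor `c` such that every edge between `c` and `u` and every edge
between `c` and `v` is labelled with `x`. -/
def csim {V A : Type} (x : V) (u v : List (Triple V A)) : Prop :=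
  ∃ c d₁ d₂ : List (Triple V A),
    u = d₁ ++ c ∧ v = d₂ ++ c ∧ (∀ t ∈ d₁, x ∈ t.1) ∧ (∀ t ∈ d₂, x ∈ t.1)

section Aux

variable {V A : Type}

lemma deriv_mono {F G : Set (Formula V A)} (h : F ⊆ G) {φ : Formula V A}
    (d : Deriv F φ) : Deriv G φ := by
  induction d with
  | thm h' => exact .thm h'
  | hyp h' => exact .hyp (h h')
  | mp _ _ ih1 ih2 => exact .mp ih1 ih2

lemma t_weak {φ ψ : Formula V A} : Prv (Formula.imp ψ (Formula.imp φ ψ)) :=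
  Prv.taut (fun v _ hi => by simp only [hi]; tauto)

lemma t_id {φ : Formula V A} : Prv (Formula.imp φ φ) :=
  Prv.taut (fun v _ hi => by simp only [hi]; tauto)

lemma t_s {φ χ ψ : Formula V A} :
    Prv (Formula.imp (Formula.imp φ (Formula.imp χ ψ))
      (Formula.imp (Formula.imp φ χ) (Formula.imp φ ψ))) :=
  Prv.taut (fun v _ hi => by simp only [hi]; tauto)

lemma t_dn {p q : Formula V A} :
    Prv (Formula.imp (Formula.imp (Formula.neg p) q)
      (Formula.imp (Formula.imp (Formula.neg p) (Formula.neg q)) p)) :=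
  Prv.taut (fun v hn hi => by simp only [hn, hi]; tauto)

lemma t_negI {p q : Formula V A} :
    Prv (Formula.imp (Formula.imp p q)
      (Formula.imp (Formula.imp p (Formula.neg q)) (Formula.neg p))) :=
  Prv.taut (fun v hn hi => by simp only [hn, hi]; tauto)

lemma t_iff_mpr {a b : Formula V A} :
    Prv (Formula.imp (Formula.iff a b) (Formula.imp b a)) :=
  Prv.taut (fun v hn hi => by
    simp only [Formula.iff, Formula.conj, hn, hi]; tauto)

lemma deduction {F : Set (Formula V A)} {φ ψ : Formula V A}
    (d : Deriv (insert φ F) ψ) : Deriv F (Formula.imp φ ψ) := by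
  induction d with
  | thm h => exact .mp (.thm t_weak) (.thm h)
  | hyp h =>
    rcases h with h | h
    · subst h; exact .thm t_id
    · exact .mp (.thm t_weak) (.hyp h)
  | mp _ _ ih1 ih2 => exact .mp (.mp (.thm t_s) ih1) ih2

lemma mcs_closed {F : Set (Formula V A)} (hF : MaxConsistent F) {φ : Formula V A}
    (d : Deriv F φ) : φ ∈ F := by
  by_contra hφ
  have hcons : Consistent (insert φ F) := by
    rintro ⟨χ, h1, h2⟩
    exact hF.1 ⟨χ, .mp (deduction h1) d, .mp (deduction h2) d⟩
  have := hF.2 _ (Set.subset_insert _ _) hcons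
  exact hφ (this ▸ Set.mem_insert φ F)

lemma mcs_neg_mem {F : Set (Formula V A)} (hF : MaxConsistent F) {φ : Formula V A}
    (h : φ ∉ F) : Formula.neg φ ∈ F := by
  have hincons : ¬ Consistent (insert φ F) := by
    intro hcons
    exact h ((hF.2 _ (Set.subset_insert _ _) hcons) ▸ Set.mem_insert φ F)
  rw [Consistent, not_not] at hincons
  obtain ⟨χ, h1, h2⟩ := hincons
  exact mcs_closed hF (.mp (.mp (.thm t_negI) (deduction h1)) (deduction h2))

lemma compactness {F : Set (Formula V A)} {φ : Formula V A} (d : Deriv F φ) :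
    ∃ L : List (Formula V A), (∀ x ∈ L, x ∈ F) ∧ Deriv {x | x ∈ L} φ := by
  induction d with
  | thm h => exact ⟨[], by simp, .thm h⟩
  | hyp h => exact ⟨[_], by simpa using h, .hyp (by simp)⟩
  | mp _ _ ih1 ih2 =>
    obtain ⟨L1, hL1, d1⟩ := ih1
    obtain ⟨L2, hL2, d2⟩ := ih2
    refine ⟨L1 ++ L2, ?_, ?_⟩
    · intro x hx
      rcases List.mem_append.1 hx with h | h
      exacts [hL1 x h, hL2 x h]
    · exact .mp (deriv_mono (fun x hx => List.mem_append.2 (Or.inl hx)) d1)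
        (deriv_mono (fun x hx => List.mem_append.2 (Or.inr hx)) d2)

lemma list_subset_chain {c : Set (Set (Formula V A))} (hc : IsChain (· ⊆ ·) c)
    (hne : c.Nonempty) (L : List (Formula V A)) (hL : ∀ x ∈ L, x ∈ ⋃₀ c) :
    ∃ s ∈ c, ∀ x ∈ L, x ∈ s := by
  induction L with
  | nil => exact ⟨hne.choose, hne.choose_spec, by simp⟩
  | cons a L ih =>
    obtain ⟨s, hs, hsL⟩ := ih (fun x hx => hL x (by simp [hx]))
    obtain ⟨t, ht, hat⟩ := hL a (by simp)
    rcases eq_or_ne s t with rfl | hst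
    · exact ⟨s, hs, by simpa using ⟨hat, hsL⟩⟩
    · rcases hc hs ht hst with h | h
      · exact ⟨t, ht, by simpa using ⟨hat, fun x hx => h (hsL x hx)⟩⟩
      · exact ⟨s, hs, by simpa using ⟨h hat, hsL⟩⟩

lemma lindenbaum {G : Set (Formula V A)} (hG : Consistent G) :
    ∃ F : Set (Formula V A), G ⊆ F ∧ MaxConsistent F := by
  obtain ⟨m, hGm, hm⟩ := zorn_subset_nonempty {F : Set (Formula V A) | Consistent F}
    (fun c hcS hc hne => by
      refine ⟨⋃₀ c, ?_, fun s hs => Set.subset_sUnion_of_mem hs⟩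
      rintro ⟨χ, h1, h2⟩
      obtain ⟨L1, hL1, d1⟩ := compactness h1
      obtain ⟨L2, hL2, d2⟩ := compactness h2
      obtain ⟨s, hs, hsub⟩ := list_subset_chain hc hne (L1 ++ L2) (by
        simp only [List.mem_append]
        rintro x (hx | hx)
        exacts [hL1 x hx, hL2 x hx])
      refine hcS hs ⟨χ, ?_, ?_⟩
      · exact deriv_mono (fun x hx => hsub x (List.mem_append.2 (Or.inl hx))) d1
      · exact deriv_mono (fun x hx => hsub x (List.mem_append.2 (Or.inr hx))) d2)
    G hG
  refine ⟨m, hGm, hm.1, fun F hmF hF => ?_⟩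
  exact le_antisymm (hm.2 hF hmF) hmF

lemma world_mcs {T₀ : Set V} {F₀ : Set (Formula V A)} {w : List (Triple V A)}
    (hw : IsWorld T₀ F₀ w) : MaxConsistent (worldF F₀ w) := by
  cases w with
  | nil => exact hw.1
  | cons t rest =>
    obtain ⟨X, T, F⟩ := t
    exact hw.2.1.1

end Aux

/-- Lemma 9 ("child exists"): in the canonical model, for any world `w` and any
formula `[U]B^T_X φ ∉ F(w)`, there exists a world `w'` such that `w ∼_{U∪X} w'`,
`T ⊆ 𝒯_{w'}`, and `[U]φ ∉ F(w')`. -/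
theorem child_exists {V A : Type} (T₀ : Set V) (F₀ : Set (Formula V A))
    (w : List (Triple V A)) (hw : IsWorld T₀ F₀ w)
    (U T X : Set V) (φ : Formula V A)
    (h : Formula.ann U (.bel T X φ) ∉ worldF F₀ w) :
    ∃ w' : List (Triple V A), IsWorld T₀ F₀ w' ∧
      (∀ x ∈ U ∪ X, csim x w w') ∧ T ⊆ worldT T₀ w' ∧
      Formula.ann U φ ∉ worldF F₀ w' := by
  classical
  set Fw := worldF F₀ w with hFw
  have hFwmcs : MaxConsistent Fw := world_mcs hw
  -- the base set of hypotheses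
  set G₀ : Set (Formula V A) :=
    {ψ | Formula.bel ∅ (U ∪ X) ψ ∈ Fw} ∪
      {θ | ∃ (Y : Set V) (χ : Formula V A), θ = Formula.imp (.bel T Y χ) χ} with hG₀
  -- lifting derivations from G₀ to Fw under B^T_{U∪X}
  have lift : ∀ {ψ : Formula V A}, Deriv G₀ ψ → Deriv Fw (Formula.bel T (U ∪ X) ψ) := by
    intro ψ d
    induction d with
    | thm h => exact .thm (Prv.necB _ _ h)
    | hyp h =>
      rcases h with h | h
      · exact .mp (.thm (Prv.mono _ (Set.empty_subset T) subset_rfl)) (.hyp h)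
      · obtain ⟨Y, χ, rfl⟩ := h
        exact .thm (Prv.trust T (U ∪ X) Y χ)
    | mp _ _ ih1 ih2 => exact .mp (.mp (.thm (Prv.distB _ _ _ _)) ih1) ih2
  -- G₀ plus ¬[U]φ is consistent
  have hcons : Consistent (insert (Formula.neg (Formula.ann U φ)) G₀) := by
    rintro ⟨χ, h1, h2⟩
    have d : Deriv G₀ (Formula.ann U φ) :=
      .mp (.mp (.thm t_dn) (deduction h1)) (deduction h2)
    have dFw : Deriv Fw (Formula.bel T (U ∪ X) (Formula.ann U φ)) := lift d
    have dmem : Formula.ann U (Formula.bel T X φ) ∈ Fw :=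
      mcs_closed hFwmcs (.mp (.mp (.thm t_iff_mpr) (.thm (Prv.comm T X U φ))) dFw)
    exact h dmem
  obtain ⟨F', hGF', hF'⟩ := lindenbaum hcons
  refine ⟨(U ∪ X, T, F') :: w, ?_, ?_, ?_, ?_⟩
  · refine ⟨hw, ⟨hF', fun Y χ => hGF' (Set.mem_insert_iff.2 (Or.inr (Or.inr ⟨Y, χ, rfl⟩)))⟩,
      fun ψ hψ => hGF' (Set.mem_insert_iff.2 (Or.inr (Or.inl hψ)))⟩
  · intro x hx
    exact ⟨w, [], [(U ∪ X, T, F')], rfl, rfl, by simp, by simpa using hx⟩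
  · exact subset_rfl
  · intro hmem
    exact hF'.1 ⟨Formula.ann U φ, .hyp hmem, .hyp (hGF' (Set.mem_insert _ _))⟩
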